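/- Let M be an n×n Metzler real matrix each of whose columns sums to zero, and let β^P, β^I, γ, δ, α be diagonal n×n real matrices with strictly positive diagonal entries. Then M − δ, M − γ and M − α are invertible, the matrix Id − (β^P)⁻¹·β^I·(M − δ)⁻¹·γ has all entries nonnegative, and consequently, for any entrywise nonnegative vector μ ∈ ℝ^n, the SEPIR next-generation matrix G = β^P·diag(μ)·(Id − (β^P)⁻¹·β^I·(M − δ)⁻¹·γ)·(M − γ)⁻¹·α·(M − α)⁻¹ has all entries nonnegative. -/

import Mathlib

open Matrix

/-- A square real matrix is Metzler if all its off-diagonal entries are nonnegative. -/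
def Matrix.IsMetzler {n : Type*} (M : Matrix n n ℝ) : Prop :=
  ∀ i j, i ≠ j → 0 ≤ M i j

section Key

open scoped NNReal

set_option linter.unusedSectionVars false

variable {n : Type*} [Fintype n] [DecidableEq n]

attribute [local instance] Matrix.linftyOpNormedRing Matrix.linftyOpNormedAlgebra

noncomputable local instance : CompleteSpace (Matrix n n ℝ) :=
  FiniteDimensional.complete ℝ _

private lemma mul_entries_nonneg {A B : Matrix n n ℝ}
    (hA : ∀ i j, 0 ≤ A i j) (hB : ∀ i j, 0 ≤ B i j) : ∀ i j, 0 ≤ (A * B) i j := by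
  intro i j
  rw [Matrix.mul_apply]
  exact Finset.sum_nonneg fun k _ => mul_nonneg (hA i k) (hB k j)

private lemma mul_entries_nonpos_nonneg {A B : Matrix n n ℝ}
    (hA : ∀ i j, A i j ≤ 0) (hB : ∀ i j, 0 ≤ B i j) : ∀ i j, (A * B) i j ≤ 0 := by
  intro i j
  rw [Matrix.mul_apply]
  exact Finset.sum_nonpos fun k _ => mul_nonpos_of_nonpos_of_nonneg (hA i k) (hB k j)

private lemma mul_entries_nonpos_nonpos {A B : Matrix n n ℝ}
    (hA : ∀ i j, A i j ≤ 0) (hB : ∀ i j, B i j ≤ 0) : ∀ i j, 0 ≤ (A * B) i j := by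
  intro i j
  rw [Matrix.mul_apply]
  refine Finset.sum_nonneg fun k _ => ?_
  have := mul_nonneg (neg_nonneg.2 (hA i k)) (neg_nonneg.2 (hB k j))
  rwa [neg_mul_neg] at this

lemma metzler_key (M : Matrix n n ℝ) (hM : M.IsMetzler) (hcol : ∀ j, ∑ i, M i j = 0)
    (d : n → ℝ) (hd : ∀ i, 0 < d i) :
    IsUnit (M - Matrix.diagonal d) ∧ ∀ i j, (M - Matrix.diagonal d)⁻¹ i j ≤ 0 := by
  set A : Matrix n n ℝ := Matrix.diagonal d - M with hA
  set s : ℝ := 1 + ∑ j, (d j + |M j j|) with hs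
  have hsum_nonneg : (0:ℝ) ≤ ∑ j, (d j + |M j j|) :=
    Finset.sum_nonneg fun j _ => add_nonneg (hd j).le (abs_nonneg _)
  have hspos : 0 < s := by positivity
  have hterm : ∀ i, d i + |M i i| ≤ s - 1 := by
    intro i
    have h := Finset.single_le_sum (f := fun j => d j + |M j j|)
      (fun j _ => add_nonneg (hd j).le (abs_nonneg _)) (Finset.mem_univ i)
    have h' : d i + |M i i| ≤ ∑ j, (d j + |M j j|) := h
    rw [hs]; linarith
  have hds : ∀ i, d i ≤ s := fun i => by
    have := hterm i; have := abs_nonneg (M i i); linarith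
  have hAii : ∀ i, d i - M i i ≤ s := fun i => by
    have := hterm i; have := neg_abs_le (M i i); linarith
  set B : Matrix n n ℝ := 1 - s⁻¹ • A with hB
  have hBentry : ∀ i j, 0 ≤ B i j := by
    intro i j
    by_cases hij : i = j
    · subst hij
      simp only [hB, hA, Matrix.sub_apply, Matrix.smul_apply, Matrix.one_apply_eq,
        Matrix.diagonal_apply_eq, smul_eq_mul]
      rw [sub_nonneg]
      calc s⁻¹ * (d i - M i i) ≤ s⁻¹ * s :=
            mul_le_mul_of_nonneg_left (hAii i) (inv_nonneg.2 hspos.le)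
        _ = 1 := inv_mul_cancel₀ hspos.ne'
    · simp only [hB, hA, Matrix.sub_apply, Matrix.smul_apply, Matrix.one_apply_ne hij,
        Matrix.diagonal_apply_ne _ hij, smul_eq_mul]
      have h1 : 0 ≤ s⁻¹ * M i j := mul_nonneg (inv_nonneg.2 hspos.le) (hM i j hij)
      linarith
  have hcolA : ∀ j, ∑ i, A i j = d j := by
    intro j
    simp only [hA, Matrix.sub_apply]
    rw [Finset.sum_sub_distrib, hcol, sub_zero]
    simp [Matrix.diagonal_apply]
  have hcolB : ∀ j, ∑ i, B i j = 1 - s⁻¹ * d j := by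
    intro j
    simp only [hB, Matrix.sub_apply, Matrix.smul_apply, smul_eq_mul]
    rw [Finset.sum_sub_distrib, ← Finset.mul_sum, hcolA]
    congr 1
    simp [Matrix.one_apply]
  have hBnorm : ‖Bᵀ‖ < 1 := by
    have h1 : ‖Bᵀ‖₊ < 1 := by
      rw [Matrix.linfty_opNNNorm_def]
      rw [Finset.sup_lt_iff (by norm_num : (⊥ : ℝ≥0) < 1)]
      intro i _
      have hrow : ∑ j, ‖Bᵀ i j‖ = 1 - s⁻¹ * d i := by
        calc ∑ j, ‖Bᵀ i j‖ = ∑ j, B j i := by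
              refine Finset.sum_congr rfl fun j _ => ?_
              rw [Matrix.transpose_apply, Real.norm_eq_abs, abs_of_nonneg (hBentry j i)]
          _ = 1 - s⁻¹ * d i := hcolB i
      rw [← NNReal.coe_lt_coe]
      push_cast
      calc ∑ j, (‖Bᵀ i j‖₊ : ℝ) = ∑ j, ‖Bᵀ i j‖ := by norm_num
        _ = 1 - s⁻¹ * d i := hrow
        _ < 1 := by
            have : 0 < s⁻¹ * d i := mul_pos (inv_pos.2 hspos) (hd i)
            linarith
    calc ‖Bᵀ‖ = (‖Bᵀ‖₊ : ℝ) := rfl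
      _ < 1 := h1
  set S : Matrix n n ℝ := ∑' k : ℕ, Bᵀ ^ k with hSdef
  have hSsum : HasSum (fun k : ℕ => Bᵀ ^ k) S :=
    (summable_geometric_of_norm_lt_one hBnorm).hasSum
  have hBTpow : ∀ (k : ℕ) i j, 0 ≤ (Bᵀ ^ k) i j := by
    intro k
    induction k with
    | zero =>
        intro i j
        simp only [pow_zero, Matrix.one_apply]
        split <;> norm_num
    | succ m ih =>
        rw [pow_succ]
        exact mul_entries_nonneg ih (fun i j => hBentry j i)
  have hentry_abs : ∀ (X : Matrix n n ℝ) i j, |X i j| ≤ ‖X‖ := by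
    intro X i j
    have h : ‖X i j‖₊ ≤ ‖X‖₊ := by
      rw [Matrix.linfty_opNNNorm_def]
      exact le_trans
        (Finset.single_le_sum (f := fun k => ‖X i k‖₊) (fun _ _ => zero_le)
          (Finset.mem_univ j))
        (Finset.le_sup (f := fun i => ∑ j, ‖X i j‖₊) (Finset.mem_univ i))
    calc |X i j| = ‖X i j‖ := (Real.norm_eq_abs _).symm
      _ ≤ ‖X‖ := h
  have hSnonneg : ∀ i j, 0 ≤ S i j := by
    intro i j
    let e : Matrix n n ℝ →+ ℝ := AddMonoidHom.mk' (fun X => X i j) (fun _ _ => rfl)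
    have hcont : Continuous e := by
      refine (LipschitzWith.of_dist_le_mul (K := 1) fun X Y => ?_).continuous
      rw [NNReal.coe_one, one_mul, dist_eq_norm, dist_eq_norm, Real.norm_eq_abs]
      exact hentry_abs (X - Y) i j
    have := hSsum.map e hcont
    exact hasSum_le (fun k => hBTpow k i j) hasSum_zero this
  have hgeom : S * (1 - Bᵀ) = 1 := geom_series_mul_neg Bᵀ hBnorm
  have hAT : (Matrix.diagonal d - M)ᵀ = s • (1 - Bᵀ) := by
    have h1 : (1 : Matrix n n ℝ) - B = s⁻¹ • A := by rw [hB]; ring_nf; abel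
    have h2 : A = s • ((1 : Matrix n n ℝ) - B) := by
      rw [h1, smul_smul, mul_inv_cancel₀ hspos.ne', one_smul]
    calc (Matrix.diagonal d - M)ᵀ = Aᵀ := rfl
      _ = (s • ((1 : Matrix n n ℝ) - B))ᵀ := by rw [← h2]
      _ = s • ((1 : Matrix n n ℝ) - B)ᵀ := by rw [Matrix.transpose_smul]
      _ = s • (1 - Bᵀ) := by rw [Matrix.transpose_sub, Matrix.transpose_one]
  have hleft : (s⁻¹ • S) * Aᵀ = 1 := by
    have : Aᵀ = s • (1 - Bᵀ) := hAT
    rw [this, smul_mul_smul_comm, inv_mul_cancel₀ hspos.ne', hgeom, one_smul]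
  have hATinv : (Aᵀ)⁻¹ = s⁻¹ • S := Matrix.inv_eq_left_inv hleft
  have hUnitAT : IsUnit Aᵀ := (Matrix.isUnit_iff_isUnit_det _).2 (Matrix.isUnit_det_of_left_inverse hleft)
  have hUnitA : IsUnit A := by
    rw [Matrix.isUnit_iff_isUnit_det] at hUnitAT ⊢
    rwa [Matrix.det_transpose] at hUnitAT
  have hAinv_nonneg : ∀ i j, 0 ≤ A⁻¹ i j := by
    intro i j
    have h1 : A⁻¹ = ((Aᵀ)⁻¹)ᵀ := by rw [← Matrix.transpose_nonsing_inv, Matrix.transpose_transpose]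
    rw [h1, hATinv]
    simp only [Matrix.transpose_apply, Matrix.smul_apply, smul_eq_mul]
    exact mul_nonneg (inv_nonneg.2 hspos.le) (hSnonneg j i)
  have hMdA : M - Matrix.diagonal d = -A := by rw [hA]; abel
  have hAinvA : A⁻¹ * A = 1 :=
    Matrix.nonsing_inv_mul A (Matrix.isUnit_iff_isUnit_det A |>.1 hUnitA)
  have hleft' : (-(A⁻¹)) * (M - Matrix.diagonal d) = 1 := by
    rw [hMdA, Matrix.neg_mul, Matrix.mul_neg, neg_neg, hAinvA]
  refine ⟨(Matrix.isUnit_iff_isUnit_det _).2 (Matrix.isUnit_det_of_left_inverse hleft'), ?_⟩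
  intro i j
  rw [Matrix.inv_eq_left_inv hleft']
  simp only [Matrix.neg_apply]
  linarith [hAinv_nonneg i j]

end Key

private lemma mul_entries_nonneg_nonpos {n : Type*} [Fintype n] {A B : Matrix n n ℝ}
    (hA : ∀ i j, 0 ≤ A i j) (hB : ∀ i j, B i j ≤ 0) : ∀ i j, (A * B) i j ≤ 0 := by
  intro i j
  rw [Matrix.mul_apply]
  exact Finset.sum_nonpos fun k _ => mul_nonpos_of_nonneg_of_nonpos (hA i k) (hB k j)

private lemma diagonal_entries_nonneg {n : Type*} [Fintype n] [DecidableEq n] {v : n → ℝ}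
    (hv : ∀ i, 0 ≤ v i) : ∀ i j, 0 ≤ Matrix.diagonal v i j := by
  intro i j
  rw [Matrix.diagonal_apply]
  split
  · exact hv i
  · exact le_refl 0

private lemma inv_diagonal_pos {n : Type*} [Fintype n] [DecidableEq n] {v : n → ℝ}
    (hv : ∀ i, 0 < v i) : (Matrix.diagonal v)⁻¹ = Matrix.diagonal (fun i => (v i)⁻¹) := by
  apply Matrix.inv_eq_left_inv
  rw [Matrix.diagonal_mul_diagonal]
  have h : (fun i => (v i)⁻¹ * v i) = fun _ => (1:ℝ) := funext fun i => inv_mul_cancel₀ (hv i).ne'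
  rw [h]
  exact Matrix.diagonal_one

/-- for `M` Metzler with columns summing to zero and diagonal matrices
`βP, βI, γ, δ, α` with positive diagonals, the matrices `M - δ`, `M - γ`, `M - α` are
invertible, `Id - (βP)⁻¹ βI (M - δ)⁻¹ γ` is entrywise nonnegative, and the SEPIR
next-generation matrix `G = βP diag μ (Id - (βP)⁻¹ βI (M - δ)⁻¹ γ) (M - γ)⁻¹ α (M - α)⁻¹`
is entrywise nonnegative for every entrywise nonnegative `μ`. -/
theorem sepir_nextGeneration_nonneg {n : Type*} [Fintype n] [DecidableEq n]
    (M : Matrix n n ℝ) (hM : M.IsMetzler) (hcol : ∀ j, ∑ i, M i j = 0)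
    (βP βI γv δv αv : n → ℝ)
    (hβP : ∀ i, 0 < βP i) (hβI : ∀ i, 0 < βI i) (hγ : ∀ i, 0 < γv i)
    (hδ : ∀ i, 0 < δv i) (hα : ∀ i, 0 < αv i) :
    IsUnit (M - Matrix.diagonal δv) ∧ IsUnit (M - Matrix.diagonal γv) ∧
    IsUnit (M - Matrix.diagonal αv) ∧
    (∀ i j, 0 ≤ ((1 : Matrix n n ℝ) - (Matrix.diagonal βP)⁻¹ * Matrix.diagonal βI *
      (M - Matrix.diagonal δv)⁻¹ * Matrix.diagonal γv) i j) ∧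
    ∀ μ : n → ℝ, (∀ i, 0 ≤ μ i) →
      ∀ i j, 0 ≤ (Matrix.diagonal βP * Matrix.diagonal μ *
        ((1 : Matrix n n ℝ) - (Matrix.diagonal βP)⁻¹ * Matrix.diagonal βI *
          (M - Matrix.diagonal δv)⁻¹ * Matrix.diagonal γv) *
        (M - Matrix.diagonal γv)⁻¹ * Matrix.diagonal αv * (M - Matrix.diagonal αv)⁻¹) i j := by
  obtain ⟨hδu, hδinv⟩ := metzler_key M hM hcol δv hδ
  obtain ⟨hγu, hγinv⟩ := metzler_key M hM hcol γv hγ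
  obtain ⟨hαu, hαinv⟩ := metzler_key M hM hcol αv hα
  have hβPinv : (Matrix.diagonal βP)⁻¹ = Matrix.diagonal (fun i => (βP i)⁻¹) :=
    inv_diagonal_pos hβP
  have hD1 : ∀ i j, 0 ≤ (Matrix.diagonal βP)⁻¹ i j := by
    rw [hβPinv]
    exact diagonal_entries_nonneg fun i => (inv_nonneg.2 (hβP i).le)
  have hT1 : ∀ i j, 0 ≤ ((Matrix.diagonal βP)⁻¹ * Matrix.diagonal βI) i j :=
    mul_entries_nonneg hD1 (diagonal_entries_nonneg fun i => (hβI i).le)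
  have hT2 : ∀ i j, ((Matrix.diagonal βP)⁻¹ * Matrix.diagonal βI *
      (M - Matrix.diagonal δv)⁻¹) i j ≤ 0 :=
    mul_entries_nonneg_nonpos hT1 hδinv
  have hT3 : ∀ i j, ((Matrix.diagonal βP)⁻¹ * Matrix.diagonal βI *
      (M - Matrix.diagonal δv)⁻¹ * Matrix.diagonal γv) i j ≤ 0 :=
    mul_entries_nonpos_nonneg hT2 (diagonal_entries_nonneg fun i => (hγ i).le)
  have hN : ∀ i j, 0 ≤ ((1 : Matrix n n ℝ) - (Matrix.diagonal βP)⁻¹ * Matrix.diagonal βI *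
      (M - Matrix.diagonal δv)⁻¹ * Matrix.diagonal γv) i j := by
    intro i j
    rw [Matrix.sub_apply]
    have h1 : (0:ℝ) ≤ (1 : Matrix n n ℝ) i j := by
      rw [Matrix.one_apply]; split <;> norm_num
    linarith [hT3 i j]
  refine ⟨hδu, hγu, hαu, hN, ?_⟩
  intro μ hμ i j
  have h1 : ∀ i j, 0 ≤ (Matrix.diagonal βP * Matrix.diagonal μ) i j :=
    mul_entries_nonneg (diagonal_entries_nonneg fun i => (hβP i).le)
      (diagonal_entries_nonneg hμ)
  have h2 := mul_entries_nonneg h1 hN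
  have h3 := mul_entries_nonneg_nonpos h2 hγinv
  have h4 := mul_entries_nonpos_nonneg h3 (diagonal_entries_nonneg fun i => (hα i).le)
  exact mul_entries_nonpos_nonpos h4 hαinv i j
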